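/- Let G be a simple d-regular graph (d ≥ 1) on a finite vertex set V of size n ≥ 1, let ε ≥ 0 and κ ∈ (0,1] be real, and suppose that for every subset S ⊆ V the number e(S, V∖S) of edges of G with exactly one endpoint in S satisfies e(S, V∖S) ≥ κ·d·|S|·(n−|S|)/n. Then for any three independent sets I₁, I₂, I₃ of G, each of size at least (1/2 − ε)·n, writing w_{kl} = |I_k ∩ I_l|/n, one has (w₁₂ + ε)² + (w₁₃ + ε)² + (w₂₃ + ε)² ≥ (1/4)·(1 − 6ε/κ). -/

import Mathlib

open Finset

/-- Number of edges of `G` with exactly one endpoint in `S` (counted via the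
orientation whose first coordinate lies in `S`). -/
def crossCount {V : Type*} [Fintype V] [DecidableEq V] (G : SimpleGraph V)
    [DecidableRel G.Adj] (S : Finset V) : ℕ :=
  (Finset.univ.filter (fun p : V × V => G.Adj p.1 p.2 ∧ p.1 ∈ S ∧ p.2 ∉ S)).card

section Aux

variable {V : Type*} [Fintype V] [DecidableEq V] (G : SimpleGraph V) [DecidableRel G.Adj]

lemma adjcount (d : ℕ) (hreg : G.IsRegularOfDegree d) (U : Finset V)
    (Q : V → Prop) [DecidablePred Q] :
    (univ.filter fun p : V × V => G.Adj p.1 p.2 ∧ p.1 ∈ U ∧ Q p.2).card ≤ d * U.card := by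
  classical
  have h : (univ.filter fun p : V × V => G.Adj p.1 p.2 ∧ p.1 ∈ U ∧ Q p.2)
      ⊆ U.biUnion (fun u => (G.neighborFinset u).map
        ⟨fun v => (u, v), by intro a b hab; simpa using hab⟩) := by
    intro ⟨u, v⟩ hp
    simp only [mem_filter, mem_univ, true_and] at hp
    simp only [mem_biUnion, Finset.mem_map, Function.Embedding.coeFn_mk,
      SimpleGraph.mem_neighborFinset]
    exact ⟨u, hp.2.1, v, hp.1, rfl⟩
  calc _ ≤ (U.biUnion (fun u => (G.neighborFinset u).map
        ⟨fun v => (u, v), by intro a b hab; simpa using hab⟩)).card := Finset.card_le_card h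
    _ = ∑ u ∈ U, ((G.neighborFinset u).map
        ⟨fun v => (u, v), by intro a b hab; simpa using hab⟩).card := by
        apply Finset.card_biUnion
        intro x _ y _ hxy
        simp only [Finset.disjoint_left]
        rintro ⟨a, b⟩ ha hb
        simp only [Finset.mem_map, Function.Embedding.coeFn_mk] at ha hb
        obtain ⟨_, _, h1⟩ := ha
        obtain ⟨_, _, h2⟩ := hb
        exact hxy ((Prod.ext_iff.mp h1).1.trans (Prod.ext_iff.mp h2).1.symm)
    _ = ∑ u ∈ U, d := by
        refine Finset.sum_congr rfl fun u _ => ?_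
        rw [Finset.card_map, SimpleGraph.card_neighborFinset_eq_degree, hreg u]
    _ = d * U.card := by rw [Finset.sum_const, smul_eq_mul, mul_comm]

lemma adjcount_exact (d : ℕ) (hreg : G.IsRegularOfDegree d) (U : Finset V) :
    (univ.filter fun p : V × V => G.Adj p.1 p.2 ∧ p.1 ∈ U).card = d * U.card := by
  classical
  have h : (univ.filter fun p : V × V => G.Adj p.1 p.2 ∧ p.1 ∈ U)
      = U.biUnion (fun u => (G.neighborFinset u).map
        ⟨fun v => (u, v), by intro a b hab; simpa using hab⟩) := by
    ext ⟨u, v⟩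
    simp only [mem_filter, mem_univ, true_and, mem_biUnion, Finset.mem_map,
      Function.Embedding.coeFn_mk, SimpleGraph.mem_neighborFinset]
    constructor
    · rintro ⟨hadj, hu⟩; exact ⟨u, hu, v, hadj, rfl⟩
    · rintro ⟨x, hx, y, hadj, heq⟩
      obtain ⟨h1, h2⟩ := Prod.mk.injEq _ _ _ _ |>.mp heq
      subst h1; subst h2; exact ⟨hadj, hx⟩
  rw [h]
  rw [Finset.card_biUnion]
  · calc _ = ∑ u ∈ U, d := by
          refine Finset.sum_congr rfl fun u _ => ?_
          rw [Finset.card_map, SimpleGraph.card_neighborFinset_eq_degree, hreg u]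
      _ = d * U.card := by rw [Finset.sum_const, smul_eq_mul, mul_comm]
  · intro x _ y _ hxy
    simp only [Finset.disjoint_left]
    rintro ⟨a, b⟩ ha hb
    simp only [Finset.mem_map, Function.Embedding.coeFn_mk] at ha hb
    obtain ⟨_, _, h1⟩ := ha
    obtain ⟨_, _, h2⟩ := hb
    exact hxy ((Prod.ext_iff.mp h1).1.trans (Prod.ext_iff.mp h2).1.symm)

lemma swapcount (X Y : Finset V) :
    (univ.filter fun p : V × V => G.Adj p.1 p.2 ∧ p.1 ∈ X ∧ p.2 ∈ Y).card
    = (univ.filter fun p : V × V => G.Adj p.1 p.2 ∧ p.1 ∈ Y ∧ p.2 ∈ X).card := by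
  apply Finset.card_bij' (fun p _ => Prod.swap p) (fun p _ => Prod.swap p)
  · rintro ⟨u, v⟩ hp
    simp only [mem_filter, mem_univ, true_and] at hp ⊢
    exact ⟨hp.1.symm, hp.2.2, hp.2.1⟩
  · rintro ⟨u, v⟩ hp
    simp only [mem_filter, mem_univ, true_and] at hp ⊢
    exact ⟨hp.1.symm, hp.2.2, hp.2.1⟩
  · rintro ⟨u, v⟩ _; rfl
  · rintro ⟨u, v⟩ _; rfl

/-- Key counting inequality: for independent sets `A`, `B`, with
`S = (A ∩ B) ∪ (A ∪ B)ᶜ`, we have `crossCount S + d⬝|A∩B| ≤ d⬝|(A∪B)ᶜ|`. -/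
lemma cross_key (d : ℕ) (hreg : G.IsRegularOfDegree d) (A B : Finset V)
    (hA : ∀ u ∈ A, ∀ v ∈ A, ¬ G.Adj u v) (hB : ∀ u ∈ B, ∀ v ∈ B, ¬ G.Adj u v) :
    crossCount G ((A ∩ B) ∪ (A ∪ B)ᶜ) + d * (A ∩ B).card ≤ d * (A ∪ B)ᶜ.card := by
  classical
  set S : Finset V := (A ∩ B) ∪ (A ∪ B)ᶜ with hS
  set T : Finset V := (A ∪ B)ᶜ with hT
  -- Step 1: first coordinate of a crossing pair must be in T
  have step1 : crossCount G S ≤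
      (univ.filter fun p : V × V => G.Adj p.1 p.2 ∧ p.1 ∈ T ∧ p.2 ∉ S).card := by
    apply Finset.card_le_card
    apply Finset.monotone_filter_right
    rintro ⟨u, v⟩ _ ⟨hadj, huS, hvS⟩
    refine ⟨hadj, ?_, hvS⟩
    rcases Finset.mem_union.mp huS with hu | hu
    · exfalso
      have hvT : v ∉ T := fun hvT => hvS (Finset.mem_union.mpr (Or.inr hvT))
      have hvAB : v ∈ A ∪ B := by
        by_contra hc
        exact hvT (Finset.mem_compl.mpr hc)
      rcases Finset.mem_union.mp hvAB with hv | hv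
      · exact hA u (Finset.mem_inter.mp hu).1 v hv hadj
      · exact hB u (Finset.mem_inter.mp hu).2 v hv hadj
    · exact hu
  -- Step 3: the count of pairs from T to A∩B equals d * |A∩B|
  have step3 : (univ.filter fun p : V × V => G.Adj p.1 p.2 ∧ p.1 ∈ T ∧ p.2 ∈ A ∩ B).card
      = d * (A ∩ B).card := by
    rw [swapcount]
    have heq : (univ.filter fun p : V × V => G.Adj p.1 p.2 ∧ p.1 ∈ A ∩ B ∧ p.2 ∈ T)
        = (univ.filter fun p : V × V => G.Adj p.1 p.2 ∧ p.1 ∈ A ∩ B) := by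
      ext ⟨u, v⟩
      simp only [mem_filter, mem_univ, true_and, and_congr_right_iff]
      intro hadj
      constructor
      · rintro ⟨h, _⟩; exact h
      · intro hu
        refine ⟨hu, Finset.mem_compl.mpr fun hv => ?_⟩
        rcases Finset.mem_union.mp hv with hv | hv
        · exact hA u (Finset.mem_inter.mp hu).1 v hv hadj
        · exact hB u (Finset.mem_inter.mp hu).2 v hv hadj
    rw [heq, adjcount_exact G d hreg]
  -- Step 2: the two T-based counts are disjoint pieces of all pairs leaving T
  have step2 : (univ.filter fun p : V × V => G.Adj p.1 p.2 ∧ p.1 ∈ T ∧ p.2 ∉ S).card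
      + (univ.filter fun p : V × V => G.Adj p.1 p.2 ∧ p.1 ∈ T ∧ p.2 ∈ A ∩ B).card
      ≤ d * T.card := by
    have hdisj : Disjoint
        (univ.filter fun p : V × V => G.Adj p.1 p.2 ∧ p.1 ∈ T ∧ p.2 ∉ S)
        (univ.filter fun p : V × V => G.Adj p.1 p.2 ∧ p.1 ∈ T ∧ p.2 ∈ A ∩ B) := by
      simp only [Finset.disjoint_left, mem_filter]
      rintro ⟨u, v⟩ ⟨_, _, _, hv⟩ ⟨_, _, _, hv'⟩
      exact hv (Finset.mem_union.mpr (Or.inl hv'))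
    have hsub : (univ.filter fun p : V × V => G.Adj p.1 p.2 ∧ p.1 ∈ T ∧ p.2 ∉ S)
        ∪ (univ.filter fun p : V × V => G.Adj p.1 p.2 ∧ p.1 ∈ T ∧ p.2 ∈ A ∩ B)
        ⊆ (univ.filter fun p : V × V => G.Adj p.1 p.2 ∧ p.1 ∈ T) := by
      intro p hp
      rcases Finset.mem_union.mp hp with hp | hp <;>
      · simp only [mem_filter, mem_univ, true_and] at hp ⊢
        exact ⟨hp.1, hp.2.1⟩
    calc _ = ((univ.filter fun p : V × V => G.Adj p.1 p.2 ∧ p.1 ∈ T ∧ p.2 ∉ S)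
        ∪ (univ.filter fun p : V × V => G.Adj p.1 p.2 ∧ p.1 ∈ T ∧ p.2 ∈ A ∩ B)).card :=
          (Finset.card_union_of_disjoint hdisj).symm
      _ ≤ (univ.filter fun p : V × V => G.Adj p.1 p.2 ∧ p.1 ∈ T).card :=
          Finset.card_le_card hsub
      _ = d * T.card := adjcount_exact G d hreg T
  omega

/-- Real-valued per-pair bound from expansion. -/
lemma pair_aux (d n : ℕ) (hd : 1 ≤ d) (hreg : G.IsRegularOfDegree d)
    (hn : n = Fintype.card V) (hn1 : 1 ≤ n) (κ : ℝ) (hκ0 : 0 < κ)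
    (hexp : ∀ S : Finset V,
      κ * d * (S.card : ℝ) * ((n : ℝ) - S.card) / n ≤ (crossCount G S : ℝ))
    (A B : Finset V)
    (hA : ∀ u ∈ A, ∀ v ∈ A, ¬ G.Adj u v) (hB : ∀ u ∈ B, ∀ v ∈ B, ¬ G.Adj u v) :
    κ * ((n : ℝ) - A.card - B.card + 2 * ((A ∩ B).card : ℝ))
      * ((A.card : ℝ) + B.card - 2 * ((A ∩ B).card : ℝ))
      ≤ (n : ℝ) * ((n : ℝ) - A.card - B.card)
    ∧ (0 : ℝ) ≤ (n : ℝ) - A.card - B.card + 2 * ((A ∩ B).card : ℝ)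
    ∧ (n : ℝ) - A.card - B.card + 2 * ((A ∩ B).card : ℝ) ≤ n := by
  classical
  have hn0 : (0 : ℝ) < n := by exact_mod_cast hn1
  have hd0 : (0 : ℝ) < d := by exact_mod_cast hd
  set S : Finset V := (A ∩ B) ∪ (A ∪ B)ᶜ with hSdef
  have hdisj : Disjoint (A ∩ B) (A ∪ B)ᶜ :=
    Disjoint.mono_left Finset.inter_subset_union disjoint_compl_right
  have hScard : (S.card : ℝ) = ((A ∩ B).card : ℝ) + ((A ∪ B)ᶜ.card : ℝ) := by
    rw [hSdef, Finset.card_union_of_disjoint hdisj]; push_cast; ring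
  have hUcard : (((A ∪ B).card : ℝ)) + ((A ∩ B).card : ℝ) = (A.card : ℝ) + B.card := by
    exact_mod_cast Finset.card_union_add_card_inter A B
  have hTcard : ((A ∪ B).card : ℝ) + ((A ∪ B)ᶜ.card : ℝ) = n := by
    rw [hn]; exact_mod_cast Finset.card_add_card_compl (A ∪ B)
  have hsEq : (S.card : ℝ) = (n : ℝ) - A.card - B.card + 2 * ((A ∩ B).card : ℝ) := by
    linarith
  have hS0 : (0 : ℝ) ≤ (S.card : ℝ) := by positivity
  have hSn : (S.card : ℝ) ≤ n := by
    rw [hn]; exact_mod_cast Finset.card_le_univ S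
  refine ⟨?_, by linarith, by linarith⟩
  -- counting bound
  have hkey := cross_key G d hreg A B hA hB
  have hkeyR : (crossCount G S : ℝ) + d * ((A ∩ B).card : ℝ) ≤ d * ((A ∪ B)ᶜ.card : ℝ) := by
    exact_mod_cast hkey
  have hcc : (crossCount G S : ℝ) ≤ d * ((n : ℝ) - A.card - B.card) := by nlinarith
  have hexpS := hexp S
  rw [div_le_iff₀ hn0] at hexpS
  have h1 : κ * d * (S.card : ℝ) * ((n : ℝ) - S.card) ≤ d * ((n : ℝ) - A.card - B.card) * n := by
    calc κ * d * (S.card : ℝ) * ((n : ℝ) - S.card) ≤ (crossCount G S : ℝ) * n := hexpS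
      _ ≤ d * ((n : ℝ) - A.card - B.card) * n := by
          apply mul_le_mul_of_nonneg_right hcc hn0.le
  apply le_of_mul_le_mul_left _ hd0
  calc (d : ℝ) * (κ * ((n : ℝ) - A.card - B.card + 2 * ((A ∩ B).card : ℝ))
        * ((A.card : ℝ) + B.card - 2 * ((A ∩ B).card : ℝ)))
      = κ * d * (S.card : ℝ) * ((n : ℝ) - S.card) := by rw [hsEq]; ring
    _ ≤ d * ((n : ℝ) - A.card - B.card) * n := h1
    _ = d * ((n : ℝ) * ((n : ℝ) - A.card - B.card)) := by ring

end Aux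

set_option maxHeartbeats 1000000 in
/-- Pure real-arithmetic finale. -/
lemma final_arith (κ ε n a1 a2 a3 Wa Wb Wc : ℝ) (hκ0 : 0 < κ) (hε : 0 ≤ ε) (hn0 : 0 < n)
    (hsa1 : (1/2 - ε) * n ≤ a1) (hsa2 : (1/2 - ε) * n ≤ a2) (hsa3 : (1/2 - ε) * n ≤ a3)
    (hWa0 : 0 ≤ Wa) (hWb0 : 0 ≤ Wb) (hWc0 : 0 ≤ Wc)
    (P12 : κ * (n - a1 - a2 + 2 * Wa) * (a1 + a2 - 2 * Wa) ≤ n * (n - a1 - a2))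
    (P13 : κ * (n - a1 - a3 + 2 * Wb) * (a1 + a3 - 2 * Wb) ≤ n * (n - a1 - a3))
    (P23 : κ * (n - a2 - a3 + 2 * Wc) * (a2 + a3 - 2 * Wc) ≤ n * (n - a2 - a3))
    (C12 : 0 ≤ n - a1 - a2 + 2 * Wa) (C13 : 0 ≤ n - a1 - a3 + 2 * Wb)
    (C23 : 0 ≤ n - a2 - a3 + 2 * Wc)
    (hunion : a1 + a2 + a3 ≤ n + Wa + Wb + Wc) :
    (1 : ℝ)/4 * (1 - 6 * ε / κ) ≤ (Wa/n + ε)^2 + (Wb/n + ε)^2 + (Wc/n + ε)^2 := by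
  obtain ⟨s1, hs1def⟩ : ∃ x : ℝ, x = n - a1 - a2 + 2 * Wa := ⟨_, rfl⟩
  obtain ⟨s2, hs2def⟩ : ∃ x : ℝ, x = n - a1 - a3 + 2 * Wb := ⟨_, rfl⟩
  obtain ⟨s3, hs3def⟩ : ∃ x : ℝ, x = n - a2 - a3 + 2 * Wc := ⟨_, rfl⟩
  have P12' : κ * s1 * (n - s1) ≤ n * (n - a1 - a2) := by
    have e : κ * s1 * (n - s1) = κ * (n - a1 - a2 + 2 * Wa) * (a1 + a2 - 2 * Wa) := by
      rw [hs1def]; ring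
    rw [e]; exact P12
  have P13' : κ * s2 * (n - s2) ≤ n * (n - a1 - a3) := by
    have e : κ * s2 * (n - s2) = κ * (n - a1 - a3 + 2 * Wb) * (a1 + a3 - 2 * Wb) := by
      rw [hs2def]; ring
    rw [e]; exact P13
  have P23' : κ * s3 * (n - s3) ≤ n * (n - a2 - a3) := by
    have e : κ * s3 * (n - s3) = κ * (n - a2 - a3 + 2 * Wc) * (a2 + a3 - 2 * Wc) := by
      rw [hs3def]; ring
    rw [e]; exact P23
  have hb1 : n - a1 - a2 ≤ 2 * ε * n := by linarith
  have hb2 : n - a1 - a3 ≤ 2 * ε * n := by linarith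
  have hb3 : n - a2 - a3 ≤ 2 * ε * n := by linarith
  have hbn1 : n * (n - a1 - a2) ≤ 2 * ε * n * n := by linarith [mul_le_mul_of_nonneg_left hb1 hn0.le]
  have hbn2 : n * (n - a1 - a3) ≤ 2 * ε * n * n := by linarith [mul_le_mul_of_nonneg_left hb2 hn0.le]
  have hbn3 : n * (n - a2 - a3) ≤ 2 * ε * n * n := by linarith [mul_le_mul_of_nonneg_left hb3 hn0.le]
  have hx1 : s1 / 2 ≤ Wa + ε * n := by rw [hs1def]; linarith
  have hx2 : s2 / 2 ≤ Wb + ε * n := by rw [hs2def]; linarith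
  have hx3 : s3 / 2 ≤ Wc + ε * n := by rw [hs3def]; linarith
  have hsq1 : κ * (s1 / 2) ^ 2 ≤ κ * (Wa + ε * n) ^ 2 :=
    mul_le_mul_of_nonneg_left (pow_le_pow_left₀ (by rw [hs1def]; linarith) hx1 2) hκ0.le
  have hsq2 : κ * (s2 / 2) ^ 2 ≤ κ * (Wb + ε * n) ^ 2 :=
    mul_le_mul_of_nonneg_left (pow_le_pow_left₀ (by rw [hs2def]; linarith) hx2 2) hκ0.le
  have hsq3 : κ * (s3 / 2) ^ 2 ≤ κ * (Wc + ε * n) ^ 2 :=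
    mul_le_mul_of_nonneg_left (pow_le_pow_left₀ (by rw [hs3def]; linarith) hx3 2) hκ0.le
  have hssum : n ≤ s1 + s2 + s3 := by rw [hs1def, hs2def, hs3def]; linarith
  have h5 : κ * n * n ≤ κ * n * (s1 + s2 + s3) :=
    mul_le_mul_of_nonneg_left hssum (by positivity)
  have hq1 : κ * n * s1 - n * (n - a1 - a2) ≤ κ * s1 ^ 2 := by linarith [P12']
  have hq2 : κ * n * s2 - n * (n - a1 - a3) ≤ κ * s2 ^ 2 := by linarith [P13']
  have hq3 : κ * n * s3 - n * (n - a2 - a3) ≤ κ * s3 ^ 2 := by linarith [P23']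
  have main : κ * n * n - 6 * ε * n * n
      ≤ 4 * (κ * (Wa + ε * n) ^ 2 + κ * (Wb + ε * n) ^ 2 + κ * (Wc + ε * n) ^ 2) := by
    linarith [hsq1, hsq2, hsq3, hq1, hq2, hq3, hbn1, hbn2, hbn3, h5]
  have hn2 : (0 : ℝ) < n ^ 2 := by positivity
  have hrw : (Wa / n + ε) ^ 2 + (Wb / n + ε) ^ 2 + (Wc / n + ε) ^ 2
      = ((Wa + ε * n) ^ 2 + (Wb + ε * n) ^ 2 + (Wc + ε * n) ^ 2) / n ^ 2 := by
    first
    | (field_simp; ring)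
    | field_simp
  rw [hrw, le_div_iff₀ hn2]
  have hid : (1 : ℝ)/4 * (1 - 6 * ε / κ) * n ^ 2
      = (κ * n * n - 6 * ε * n * n) / (4 * κ) := by
    first
    | (field_simp; ring)
    | field_simp
  rw [hid, div_le_iff₀ (by positivity : (0:ℝ) < 4 * κ)]
  linarith [main]

theorem sum_of_squared_intersections_lower_bound
    {V : Type*} [Fintype V] [DecidableEq V]
    (G : SimpleGraph V) [DecidableRel G.Adj]
    (d n : ℕ) (hd : 1 ≤ d) (hreg : G.IsRegularOfDegree d)
    (hn : n = Fintype.card V) (hn1 : 1 ≤ n)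
    (ε κ : ℝ) (hε : 0 ≤ ε) (hκ0 : 0 < κ) (hκ1 : κ ≤ 1)
    (hexp : ∀ S : Finset V,
      κ * d * (S.card : ℝ) * ((n : ℝ) - S.card) / n ≤ (crossCount G S : ℝ))
    (I₁ I₂ I₃ : Finset V)
    (h₁ : ∀ u ∈ I₁, ∀ v ∈ I₁, ¬ G.Adj u v)
    (h₂ : ∀ u ∈ I₂, ∀ v ∈ I₂, ¬ G.Adj u v)
    (h₃ : ∀ u ∈ I₃, ∀ v ∈ I₃, ¬ G.Adj u v)
    (hs₁ : ((1 : ℝ)/2 - ε) * n ≤ (I₁.card : ℝ))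
    (hs₂ : ((1 : ℝ)/2 - ε) * n ≤ (I₂.card : ℝ))
    (hs₃ : ((1 : ℝ)/2 - ε) * n ≤ (I₃.card : ℝ))
    (w₁₂ w₁₃ w₂₃ : ℝ)
    (hw₁₂ : w₁₂ = ((I₁ ∩ I₂).card : ℝ) / n)
    (hw₁₃ : w₁₃ = ((I₁ ∩ I₃).card : ℝ) / n)
    (hw₂₃ : w₂₃ = ((I₂ ∩ I₃).card : ℝ) / n) :
    (1 : ℝ)/4 * (1 - 6 * ε / κ) ≤ (w₁₂ + ε)^2 + (w₁₃ + ε)^2 + (w₂₃ + ε)^2 := by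
  classical
  have hn0 : (0 : ℝ) < n := by exact_mod_cast hn1
  obtain ⟨P12, C12, C12'⟩ := pair_aux G d n hd hreg hn hn1 κ hκ0 hexp I₁ I₂ h₁ h₂
  obtain ⟨P13, C13, C13'⟩ := pair_aux G d n hd hreg hn hn1 κ hκ0 hexp I₁ I₃ h₁ h₃
  obtain ⟨P23, C23, C23'⟩ := pair_aux G d n hd hreg hn hn1 κ hκ0 hexp I₂ I₃ h₂ h₃
  have hunion : (I₁.card : ℝ) + I₂.card + I₃.card
      ≤ (n : ℝ) + ((I₁ ∩ I₂).card : ℝ) + ((I₁ ∩ I₃).card : ℝ) + ((I₂ ∩ I₃).card : ℝ) := by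
    have e1 : (I₁ ∪ I₂).card + (I₁ ∩ I₂).card = I₁.card + I₂.card :=
      Finset.card_union_add_card_inter I₁ I₂
    have e2 : ((I₁ ∪ I₂) ∪ I₃).card + ((I₁ ∪ I₂) ∩ I₃).card = (I₁ ∪ I₂).card + I₃.card :=
      Finset.card_union_add_card_inter (I₁ ∪ I₂) I₃
    have e3 : ((I₁ ∪ I₂) ∩ I₃).card ≤ (I₁ ∩ I₃).card + (I₂ ∩ I₃).card := by
      rw [Finset.union_inter_distrib_right]
      exact Finset.card_union_le _ _
    have e4 : ((I₁ ∪ I₂) ∪ I₃).card ≤ n := by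
      rw [hn]; exact Finset.card_le_univ _
    have : I₁.card + I₂.card + I₃.card
        ≤ n + (I₁ ∩ I₂).card + (I₁ ∩ I₃).card + (I₂ ∩ I₃).card := by omega
    exact_mod_cast this
  subst hw₁₂ hw₁₃ hw₂₃
  exact final_arith κ ε n (I₁.card : ℝ) (I₂.card : ℝ) (I₃.card : ℝ)
    ((I₁ ∩ I₂).card : ℝ) ((I₁ ∩ I₃).card : ℝ) ((I₂ ∩ I₃).card : ℝ)
    hκ0 hε hn0 hs₁ hs₂ hs₃ (by positivity) (by positivity) (by positivity)
    P12 P13 P23 C12 C13 C23 hunion
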